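/- If G is a graph with Z₊(G) = Z(G), then pt₊(G) ≤ ⌈pt(G)/2⌉. -/

import Mathlib

namespace ZF

variable {V : Type*} [Fintype V] [DecidableEq V]

/-- A valid standard zero forcing force within the vertex set `U`, given blue set `B`:
`u` is blue, `v` is its unique white neighbor in `U`. -/
def ZFValid (G : SimpleGraph V) (U B : Set V) (u v : V) : Prop :=
  u ∈ U ∧ v ∈ U ∧ u ∈ B ∧ v ∉ B ∧ G.Adj u v ∧
    ∀ w ∈ U, G.Adj u w → w ∉ B → w = v

/-- `whiteConn G U B a b` : `a` and `b` are joined by a walk through white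
(non-blue) vertices of `U` (possibly trivial). -/
def whiteConn (G : SimpleGraph V) (U B : Set V) : V → V → Prop :=
  Relation.ReflTransGen (fun a b => G.Adj a b ∧ a ∈ U ∧ b ∈ U ∧ a ∉ B ∧ b ∉ B)

/-- A valid PSD force within the vertex set `U`, given blue set `B`:
`u` is blue and `v` is the unique neighbor of `u` in the component of the
white subgraph containing `v`. -/
def PSDValid (G : SimpleGraph V) (U B : Set V) (u v : V) : Prop :=
  u ∈ U ∧ v ∈ U ∧ u ∈ B ∧ v ∉ B ∧ G.Adj u v ∧
    ∀ w ∈ U, G.Adj u w → w ∉ B → whiteConn G U B v w → w = v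

/-- One propagation step for a generic color change rule `valid`. -/
def step (valid : Set V → V → V → Prop) (B : Set V) : Set V :=
  B ∪ {v | ∃ u, valid B u v}

/-- Iterated propagation. -/
def iter (valid : Set V → V → V → Prop) (B : Set V) : ℕ → Set V :=
  fun k => (step valid)^[k] B

/-- `B ⊆ U` is a forcing set of the induced subgraph on `U` for the rule `valid`. -/
def IsForcingSet (valid : Set V → V → V → Prop) (U B : Set V) : Prop :=
  B ⊆ U ∧ ∃ k, U ⊆ iter valid B k

/-- Propagation time of the set `B` for rule `valid` on the induced subgraph on `U`. -/
noncomputable def propTime (valid : Set V → V → V → Prop) (U B : Set V) : ℕ :=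
  sInf {k | U ⊆ iter valid B k}

/-- Vertices blue after `k` time-steps of the family of forces `F`, starting from `B`. -/
def expand (B : Set V) (F : ℕ → Set (V × V)) : ℕ → Set V
  | 0 => B
  | k + 1 => expand B F k ∪ {v | ∃ u, (u, v) ∈ F (k + 1)}

/-- A relaxed chronology of forces (for the rule `valid`) for the forcing set `B`
on the induced subgraph on `U`, with completion time `K`: at each time-step an
arbitrary subset of the currently valid forces is performed (no vertex being
forced twice in one step), and all of `U` is blue after step `K`. -/
structure RelaxedChron (valid : Set V → V → V → Prop) (U B : Set V)
    (K : ℕ) (F : ℕ → Set (V × V)) : Prop where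
  subset : B ⊆ U
  init : F 0 = ∅
  bound : ∀ k, K < k → F k = ∅
  forcesValid : ∀ k < K, ∀ u v, (u, v) ∈ F (k + 1) → valid (expand B F k) u v
  uniqueForcer : ∀ k u₁ u₂ v, (u₁, v) ∈ F k → (u₂, v) ∈ F k → u₁ = u₂
  complete : U ⊆ expand B F K

/-- The underlying set of forces of a relaxed chronology. -/
def forcesOf (F : ℕ → Set (V × V)) (K : ℕ) : Set (V × V) :=
  {p | ∃ k, 1 ≤ k ∧ k ≤ K ∧ p ∈ F k}

/-- The terminus of a relaxed chronology: the vertices (of `U`) performing no force. -/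
def terminus (U : Set V) (F : ℕ → Set (V × V)) (K : ℕ) : Set V :=
  {v ∈ U | ∀ u, (v, u) ∉ forcesOf F K}

/-- The reversal of a relaxed chronology: each force is reversed and
the order of the time-steps is reversed. -/
def revChron (F : ℕ → Set (V × V)) (K : ℕ) : ℕ → Set (V × V) :=
  fun k => if 1 ≤ k ∧ k ≤ K then {p | (p.2, p.1) ∈ F (K - k + 1)} else ∅

/-- One round of performing all currently valid forces from the set of forces `S`. -/
def forceStep (valid : Set V → V → V → Prop) (S : Set (V × V)) (B : Set V) : Set V :=
  B ∪ {v | ∃ u, (u, v) ∈ S ∧ valid B u v}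

def forceIter (valid : Set V → V → V → Prop) (S : Set (V × V)) (B : Set V) : ℕ → Set V :=
  fun t => (forceStep valid S)^[t] B

/-- Propagation time of a set of forces `S` for starting set `B` on `U`. -/
noncomputable def ptForces (valid : Set V → V → V → Prop) (U : Set V)
    (S : Set (V × V)) (B : Set V) : ℕ :=
  sInf {t | U ⊆ forceIter valid S B t}

/-- `v` is active at time-step `k` of the relaxed chronology `F`:
it is blue after step `k` and has not yet performed a force. -/
def activeAt (B : Set V) (F : ℕ → Set (V × V)) (v : V) (k : ℕ) : Prop :=
  v ∈ expand B F k ∧ ∀ j ≤ k, ∀ u, (v, u) ∉ F j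

/-- The zero forcing number. -/
noncomputable def Z (G : SimpleGraph V) : ℕ :=
  sInf {n | ∃ B : Set V, B.ncard = n ∧ IsForcingSet (ZFValid G Set.univ) Set.univ B}

/-- The PSD forcing number. -/
noncomputable def Zplus (G : SimpleGraph V) : ℕ :=
  sInf {n | ∃ B : Set V, B.ncard = n ∧ IsForcingSet (PSDValid G Set.univ) Set.univ B}

/-- Standard `m`-propagation time `pt(G,m)`. -/
noncomputable def ptm (G : SimpleGraph V) (m : ℕ) : ℕ :=
  sInf {t | ∃ B : Set V, B.ncard = m ∧ IsForcingSet (ZFValid G Set.univ) Set.univ B ∧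
    propTime (ZFValid G Set.univ) Set.univ B = t}

/-- PSD `m`-propagation time `pt₊(G,m)`. -/
noncomputable def ptplusm (G : SimpleGraph V) (m : ℕ) : ℕ :=
  sInf {t | ∃ B : Set V, B.ncard = m ∧ IsForcingSet (PSDValid G Set.univ) Set.univ B ∧
    propTime (PSDValid G Set.univ) Set.univ B = t}

/-- Standard propagation time `pt(G)`. -/
noncomputable def pt (G : SimpleGraph V) : ℕ := ptm G (Z G)

/-- PSD propagation time `pt₊(G)`. -/
noncomputable def ptplus (G : SimpleGraph V) : ℕ := ptplusm G (Zplus G)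

/-- PSD throttling number `thr₊(G)`. -/
noncomputable def thrplus (G : SimpleGraph V) : ℕ :=
  sInf {t | ∃ B : Set V, IsForcingSet (PSDValid G Set.univ) Set.univ B ∧
    t = B.ncard + propTime (PSDValid G Set.univ) Set.univ B}

/-- Closed neighborhood of a set. -/
def closedNbhd (G : SimpleGraph V) (B : Set V) : Set V :=
  B ∪ {v | ∃ u ∈ B, G.Adj u v}

/-- Power domination process: the first step colors the closed neighborhood,
subsequent steps apply the standard zero forcing rule. -/
def pdIter (G : SimpleGraph V) (B : Set V) : ℕ → Set V
  | 0 => B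
  | 1 => closedNbhd G B
  | (k + 2) => step (ZFValid G Set.univ) (pdIter G B (k + 1))

/-- `B` is a power dominating set. -/
def IsPDSet (G : SimpleGraph V) (B : Set V) : Prop :=
  ∃ k, Set.univ ⊆ pdIter G B k

/-- Power propagation time of a set. -/
noncomputable def pdPropTime (G : SimpleGraph V) (B : Set V) : ℕ :=
  sInf {k | Set.univ ⊆ pdIter G B k}

/-- Power `m`-propagation time `ppt(G,m)`. -/
noncomputable def pptm (G : SimpleGraph V) (m : ℕ) : ℕ :=
  sInf {t | ∃ B : Set V, B.ncard = m ∧ IsPDSet G B ∧ pdPropTime G B = t}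

/-- Restriction of a family of forces to those with both endpoints in `W`. -/
def restrictF (F : ℕ → Set (V × V)) (W : Set V) : ℕ → Set (V × V) :=
  fun k => {p ∈ F k | p.1 ∈ W ∧ p.2 ∈ W}

/-- The forcing tree of `b` : all vertices reachable from `b` by a chain of forces in `S`. -/
def treeOf (S : Set (V × V)) (b : V) : Set V :=
  {w | Relation.ReflTransGen (fun a c => (a, c) ∈ S) b w}

open Classical in
/-- The endpoint, after `k` steps, of the path grown from `b ∈ B` in the
path bundle of the relaxed chronology `F` induced by the vertex `x`: the path is
extended by a force from its current endpoint into the component of white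
vertices containing `x`, whenever such a force occurs. -/
noncomputable def lastVert (G : SimpleGraph V) (B : Set V) (F : ℕ → Set (V × V))
    (x : V) (b : V) : ℕ → V
  | 0 => b
  | k + 1 =>
    if h : ∃ w, (lastVert G B F x b k, w) ∈ F (k + 1) ∧ x ∉ expand B F k ∧
        whiteConn G Set.univ (expand B F k) x w
    then h.choose else lastVert G B F x b k

/-- The vertex set of the path bundle of `F` induced by `x`. -/
def bundle (G : SimpleGraph V) (B : Set V) (F : ℕ → Set (V × V)) (x : V) (K : ℕ) : Set V :=
  {v | ∃ b ∈ B, ∃ j ≤ K, lastVert G B F x b j = v}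

/-- The path of the bundle grown from `b`, as a list of vertices. -/
noncomputable def bundlePath (G : SimpleGraph V) (B : Set V) (F : ℕ → Set (V × V))
    (x : V) (K : ℕ) (b : V) : List V :=
  ((List.range (K + 1)).map (lastVert G B F x b)).dedup

/-- A nonempty path in `G`, given as a list of distinct consecutively adjacent vertices. -/
def IsPathList (G : SimpleGraph V) (l : List V) : Prop :=
  l ≠ [] ∧ l.Nodup ∧ l.Chain' G.Adj

/-- `P` is an `(α,β)`-linkage: a collection of pairwise vertex-disjoint paths,
`α` consisting of one endpoint of each path and `β` of the other endpoints. -/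
def IsLinkage (G : SimpleGraph V) (α β : Set V) (P : Set (List V)) : Prop :=
  (∀ l ∈ P, IsPathList G l) ∧
  (∀ l ∈ P, ∀ l' ∈ P, l ≠ l' → ∀ v, v ∈ l → v ∉ l') ∧
  (∀ l ∈ P, ∀ l' ∈ P, l.head? = l'.head? → l = l') ∧
  (∀ l ∈ P, ∀ l' ∈ P, l.getLast? = l'.getLast? → l = l') ∧
  α = {v | ∃ l ∈ P, l.head? = some v} ∧
  β = {v | ∃ l ∈ P, l.getLast? = some v}

/-- `P` is a rigid linkage: for some `α`, `β` it is the unique `(α,β)`-linkage in `G`. -/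
def IsRigidLinkage (G : SimpleGraph V) (P : Set (List V)) : Prop :=
  ∃ α β, IsLinkage G α β P ∧ ∀ P', IsLinkage G α β P' → P' = P

/-- A path cover of `G` : `m` vertex-disjoint induced paths covering all vertices,
the `i`-th path having vertices `vtx i 0, …, vtx i (n i − 1)` in path order. -/
structure IsPathCover (G : SimpleGraph V) (m : ℕ) (n : Fin m → ℕ)
    (vtx : (i : Fin m) → Fin (n i) → V) : Prop where
  pos : ∀ i, 0 < n i
  inj : Function.Injective (fun p : (i : Fin m) × Fin (n i) => vtx p.1 p.2)
  cover : ∀ v : V, ∃ i j, vtx i j = v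
  induced : ∀ i (j j' : Fin (n i)),
    G.Adj (vtx i j) (vtx i j') ↔ ((j : ℕ) + 1 = (j' : ℕ) ∨ (j' : ℕ) + 1 = (j : ℕ))

/-- A witness that a path cover is a parallel increasing path cover: a collection of
block partitions of `{0,…,K}`, one per path, compatible with the edges of `G`. -/
structure IsPIPWitness (G : SimpleGraph V) (m : ℕ) (n : Fin m → ℕ)
    (vtx : (i : Fin m) → Fin (n i) → V) (K : ℕ)
    (A : (i : Fin m) → Fin (n i) → Finset ℕ) : Prop where
  mem : ∀ i j, A i j ⊆ Finset.range (K + 1)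
  nonempty : ∀ i j, (A i j).Nonempty
  partition : ∀ i, ∀ x ∈ Finset.range (K + 1), ∃! j, x ∈ A i j
  mono : ∀ i (j j' : Fin (n i)), (j : ℕ) < (j' : ℕ) → ∀ x ∈ A i j, ∀ y ∈ A i j', x < y
  edge : ∀ (i i' : Fin m) j j', i ≠ i' →
    G.Adj (vtx i j) (vtx i' j') → ((A i j) ∩ (A i' j')).Nonempty

/-- A parallel increasing path cover of `G`. -/
def IsPIP (G : SimpleGraph V) (m : ℕ) (n : Fin m → ℕ)
    (vtx : (i : Fin m) → Fin (n i) → V) : Prop :=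
  IsPathCover G m n vtx ∧ ∃ K A, IsPIPWitness G m n vtx K A

/-- The path cover given by `vtx` is the chain set of the family of forces `F` :
the underlying forces are exactly the consecutive pairs along the paths. -/
def IsChainSetOf (m : ℕ) (n : Fin m → ℕ) (vtx : (i : Fin m) → Fin (n i) → V)
    (F : ℕ → Set (V × V)) (K : ℕ) : Prop :=
  ∀ u w, (u, w) ∈ forcesOf F K ↔
    ∃ (i : Fin m) (j : Fin (n i)) (j' : Fin (n i)),
      u = vtx i j ∧ w = vtx i j' ∧ (j : ℕ) + 1 = (j' : ℕ)

end ZF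

namespace ZFAux
open ZF

variable {V : Type*} [Fintype V] [DecidableEq V]

/-- Iterates of the standard zero forcing process from `B₀`. -/
def It (G : SimpleGraph V) (B₀ : Set V) (k : ℕ) : Set V :=
  ZF.iter (ZF.ZFValid G Set.univ) B₀ k

lemma It_succ (G : SimpleGraph V) (B₀ : Set V) (k : ℕ) :
    It G B₀ (k + 1) = ZF.step (ZF.ZFValid G Set.univ) (It G B₀ k) :=
  Function.iterate_succ_apply' _ _ _

lemma It_mono (G : SimpleGraph V) (B₀ : Set V) {k l : ℕ} (hkl : k ≤ l) :
    It G B₀ k ⊆ It G B₀ l := by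
  induction l with
  | zero =>
    have : k = 0 := by omega
    subst this; exact subset_rfl
  | succ n ih =>
    rcases Nat.lt_or_ge k (n + 1) with hlt | hge
    · exact (ih (by omega)).trans (by rw [It_succ]; exact Set.subset_union_left)
    · have : k = n + 1 := by omega
      subst this; exact subset_rfl

/-- Time at which `v` becomes blue. -/
noncomputable def tau (G : SimpleGraph V) (B₀ : Set V) (v : V) : ℕ :=
  sInf {k | v ∈ It G B₀ k}

section TauFrc

variable {G : SimpleGraph V} {B₀ : Set V}

lemma tau_le {v : V} {k : ℕ} (hv : v ∈ It G B₀ k) : tau G B₀ v ≤ k :=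
  Nat.sInf_le hv

lemma mem_It_tau (hcov : ∃ k, Set.univ ⊆ It G B₀ k) (v : V) :
    v ∈ It G B₀ (tau G B₀ v) := by
  obtain ⟨k, hk⟩ := hcov
  have hne : {k | v ∈ It G B₀ k}.Nonempty := ⟨k, hk (Set.mem_univ v)⟩
  exact Nat.sInf_mem hne

lemma mem_It_iff (hcov : ∃ k, Set.univ ⊆ It G B₀ k) {v : V} {k : ℕ} :
    v ∈ It G B₀ k ↔ tau G B₀ v ≤ k :=
  ⟨tau_le, fun h => It_mono G B₀ h (mem_It_tau hcov v)⟩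

lemma not_mem_It_pred (h1 : 1 ≤ tau G B₀ v) : v ∉ It G B₀ (tau G B₀ v - 1) := by
  intro hmem
  have := tau_le hmem
  omega

end TauFrc

open Classical in
/-- The forcer of `v` (junk if `v` is not forced). -/
noncomputable def frc (G : SimpleGraph V) (B₀ : Set V) (v : V) : V :=
  if hex : ∃ u, ZF.ZFValid G Set.univ (It G B₀ (tau G B₀ v - 1)) u v then hex.choose
  else v

section FrcProps

variable {G : SimpleGraph V} {B₀ : Set V}

lemma frc_valid (hcov : ∃ k, Set.univ ⊆ It G B₀ k) {v : V} (h1 : 1 ≤ tau G B₀ v) :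
    ZF.ZFValid G Set.univ (It G B₀ (tau G B₀ v - 1)) (frc G B₀ v) v := by
  have hv := mem_It_tau hcov v
  have heq : tau G B₀ v = (tau G B₀ v - 1) + 1 := by omega
  rw [heq, It_succ] at hv
  have hnot := not_mem_It_pred h1
  have hex : ∃ u, ZF.ZFValid G Set.univ (It G B₀ (tau G B₀ v - 1)) u v := by
    rcases hv with hv | hv
    · exact absurd hv hnot
    · exact hv
  rw [frc, dif_pos hex]
  exact hex.choose_spec

lemma tau_frc_le (hcov : ∃ k, Set.univ ⊆ It G B₀ k) {v : V} (h1 : 1 ≤ tau G B₀ v) :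
    tau G B₀ (frc G B₀ v) ≤ tau G B₀ v - 1 :=
  tau_le (frc_valid hcov h1).2.2.1

lemma adj_frc (hcov : ∃ k, Set.univ ⊆ It G B₀ k) {v : V} (h1 : 1 ≤ tau G B₀ v) :
    G.Adj (frc G B₀ v) v :=
  (frc_valid hcov h1).2.2.2.2.1

lemma frc_last (hcov : ∃ k, Set.univ ⊆ It G B₀ k) {v w : V} (h1 : 1 ≤ tau G B₀ v)
    (hadj : G.Adj (frc G B₀ v) w) (hw : tau G B₀ v ≤ tau G B₀ w) : w = v := by
  refine (frc_valid hcov h1).2.2.2.2.2 w (Set.mem_univ w) hadj ?_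
  intro hmem
  have := tau_le hmem
  omega

lemma frc_inj (hcov : ∃ k, Set.univ ⊆ It G B₀ k) {v v' : V} (h1 : 1 ≤ tau G B₀ v)
    (h1' : 1 ≤ tau G B₀ v') (he : frc G B₀ v = frc G B₀ v') : v = v' := by
  rcases le_total (tau G B₀ v) (tau G B₀ v') with hle | hle
  · exact (frc_last hcov h1 (he ▸ adj_frc hcov h1') hle).symm
  · exact frc_last hcov h1' (he ▸ adj_frc hcov h1) hle

lemma tau_zero_frc (hcov : ∃ k, Set.univ ⊆ It G B₀ k) {v : V} (h0 : tau G B₀ v = 0) :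
    frc G B₀ v = v := by
  rw [frc, dif_neg]
  rintro ⟨u, hu⟩
  have hv := mem_It_tau hcov v
  have : v ∈ It G B₀ (tau G B₀ v - 1) := by
    rw [h0] at hv ⊢
    exact hv
  exact hu.2.2.2.1 this

end FrcProps

/-- Blue part of the initial segments of the chains after `t` backward steps,
starting from the tops of the time-`H` segments. -/
def Dt (G : SimpleGraph V) (B₀ : Set V) (H t : ℕ) : Set V :=
  {u | tau G B₀ u ≤ H ∧ ∀ v, 1 ≤ tau G B₀ v → tau G B₀ v ≤ H → frc G B₀ v = u →
    H - t < tau G B₀ v}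

/-- Blue set after `t` PSD steps (as a lower bound). -/
def St (G : SimpleGraph V) (B₀ : Set V) (H t : ℕ) : Set V :=
  Dt G B₀ H t ∪ {v | H < tau G B₀ v ∧ tau G B₀ v ≤ H + t}

section Psd

variable {G : SimpleGraph V} {B₀ : Set V}

lemma Dt_mono {H t : ℕ} : Dt G B₀ H t ⊆ Dt G B₀ H (t + 1) := by
  rintro u ⟨h1, h2⟩
  refine ⟨h1, fun v hv1 hv2 hv3 => ?_⟩
  have := h2 v hv1 hv2 hv3
  omega

/-- All neighbours of a backward-white vertex have small `tau`. -/
lemma bw_nbr (hcov : ∃ k, Set.univ ⊆ It G B₀ k) {H t : ℕ} {b : V}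
    (hb : tau G B₀ b ≤ H) (hbD : b ∉ Dt G B₀ H t) {w : V} (hadj : G.Adj b w) :
    tau G B₀ w ≤ H - t := by
  have : ∃ v, 1 ≤ tau G B₀ v ∧ tau G B₀ v ≤ H ∧ frc G B₀ v = b ∧
      ¬ (H - t < tau G B₀ v) := by
    by_contra hcon
    push_neg at hcon
    exact hbD ⟨hb, fun v h1 h2 h3 => hcon v h1 h2 h3⟩
  obtain ⟨v, hv1, hv2, hv3, hv4⟩ := this
  rcases le_or_gt (tau G B₀ v) (tau G B₀ w) with hle | hlt
  · have := frc_last hcov hv1 (hv3 ▸ hadj) hle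
    subst this
    omega
  · omega

lemma whiteConn_fwd (hcov : ∃ k, Set.univ ⊆ It G B₀ k) {H t : ℕ} {a w : V}
    (ha : H + t < tau G B₀ a)
    (hconn : whiteConn G Set.univ (St G B₀ H t) a w) : H + t < tau G B₀ w := by
  induction hconn with
  | refl => exact ha
  | tail hbc hstep ih =>
    obtain ⟨hadj, -, -, hbS, hcS⟩ := hstep
    rcases le_or_gt (tau G B₀ _) H with hle | hlt
    · have hD : _ ∉ Dt G B₀ H t := fun hmem => hcS (Or.inl hmem)
      have := bw_nbr hcov hle hD hadj.symm
      omega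
    · have : ¬ (H < tau G B₀ _ ∧ tau G B₀ _ ≤ H + t) := fun hmem => hcS (Or.inr hmem)
      omega

lemma whiteConn_bwd (hcov : ∃ k, Set.univ ⊆ It G B₀ k) {H t : ℕ} {a w : V}
    (ha1 : tau G B₀ a ≤ H) (ha2 : a ∉ Dt G B₀ H t)
    (hconn : whiteConn G Set.univ (St G B₀ H t) a w) :
    tau G B₀ w ≤ H ∧ w ∉ Dt G B₀ H t := by
  induction hconn with
  | refl => exact ⟨ha1, ha2⟩
  | tail hbc hstep ih =>
    obtain ⟨hadj, -, -, hbS, hcS⟩ := hstep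
    have hle := bw_nbr hcov ih.1 ih.2 hadj
    exact ⟨by omega, fun hmem => hcS (Or.inl hmem)⟩

lemma whiteConn_anti {U B B' : Set V} (hBB' : B ⊆ B') {x y : V}
    (hc : whiteConn G U B' x y) : whiteConn G U B x y :=
  Relation.ReflTransGen.mono
    (r := fun a b => G.Adj a b ∧ a ∈ U ∧ b ∈ U ∧ a ∉ B' ∧ b ∉ B')
    (p := fun a b => G.Adj a b ∧ a ∈ U ∧ b ∈ U ∧ a ∉ B ∧ b ∉ B)
    (fun a b hab => ⟨hab.1, hab.2.1, hab.2.2.1, fun hm => hab.2.2.2.1 (hBB' hm),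
      fun hm => hab.2.2.2.2 (hBB' hm)⟩) x y hc

lemma psd_step_mono {B B' : Set V} (hBB' : B ⊆ B') :
    ZF.step (ZF.PSDValid G Set.univ) B ⊆ ZF.step (ZF.PSDValid G Set.univ) B' := by
  intro x hx
  rcases hx with hx | ⟨u, hu⟩
  · exact Or.inl (hBB' hx)
  · by_cases hxB : x ∈ B'
    · exact Or.inl hxB
    · refine Or.inr ⟨u, trivial, trivial, hBB' hu.2.2.1, hxB, hu.2.2.2.2.1, ?_⟩
      intro w hw hadj hwB' hcon
      exact hu.2.2.2.2.2 w hw hadj (fun hm => hwB' (hBB' hm)) (whiteConn_anti hBB' hcon)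

/-- The key inductive step: `St (t+1)` is contained in one PSD step applied to `St t`. -/
lemma St_succ_subset (hcov : ∃ k, Set.univ ⊆ It G B₀ k) {H t : ℕ} :
    St G B₀ H (t + 1) ⊆ ZF.step (ZF.PSDValid G Set.univ) (St G B₀ H t) := by
  intro x hx
  by_cases hxS : x ∈ St G B₀ H t
  · exact Or.inl hxS
  have hxD : x ∉ Dt G B₀ H t := fun hm => hxS (Or.inl hm)
  have hxM : ¬ (H < tau G B₀ x ∧ tau G B₀ x ≤ H + t) := fun hm => hxS (Or.inr hm)
  rcases hx with hD | hM
  · -- backward fresh vertex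
    obtain ⟨hx1, hx2⟩ := hD
    -- x is not in Dt H t, so it has a segment-successor of small tau
    have : ∃ y, 1 ≤ tau G B₀ y ∧ tau G B₀ y ≤ H ∧ frc G B₀ y = x ∧
        ¬ (H - t < tau G B₀ y) := by
      by_contra hcon
      push_neg at hcon
      exact hxD ⟨hx1, fun v h1 h2 h3 => hcon v h1 h2 h3⟩
    obtain ⟨y, hy1, hy2, hy3, hy4⟩ := this
    have hyt : tau G B₀ y = H - t := by
      have := hx2 y hy1 hy2 hy3
      omega
    have htH : t < H := by omega
    -- y is blue: y ∈ Dt H t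
    have hyD : y ∈ Dt G B₀ H t := by
      refine ⟨hy2, fun z hz1 hz2 hz3 => ?_⟩
      have := tau_frc_le hcov hz1
      rw [hz3] at this
      omega
    -- x is white with tau x ≤ H
    have hxτ : tau G B₀ x ≤ H := hx1
    refine Or.inr ⟨y, trivial, trivial, Or.inl hyD, hxS, (hy3 ▸ adj_frc hcov hy1).symm, ?_⟩
    intro w hw hadj hwS hconn
    obtain ⟨hw1, hw2⟩ := whiteConn_bwd hcov hxτ hxD hconn
    -- w is backward white: it has a segment-successor z with tau z ≤ H - t
    have : ∃ z, 1 ≤ tau G B₀ z ∧ tau G B₀ z ≤ H ∧ frc G B₀ z = w ∧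
        ¬ (H - t < tau G B₀ z) := by
      by_contra hcon
      push_neg at hcon
      exact hw2 ⟨hw1, fun v h1 h2 h3 => hcon v h1 h2 h3⟩
    obtain ⟨z, hz1, hz2, hz3, hz4⟩ := this
    have hyz : y = z := frc_last hcov hz1 (hz3 ▸ hadj.symm) (by omega)
    rw [← hz3, ← hyz, hy3]
  · -- forward fresh vertex
    have hxt : tau G B₀ x = H + t + 1 := by
      obtain ⟨hM1, hM2⟩ := hM
      omega
    have hx1 : 1 ≤ tau G B₀ x := by omega
    set u := frc G B₀ x with hu
    have huτ : tau G B₀ u ≤ H + t := by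
      have h5 := tau_frc_le hcov hx1
      rw [← hu] at h5
      omega
    have huS : u ∈ St G B₀ H t := by
      rcases le_or_gt (tau G B₀ u) H with hle | hlt
      · refine Or.inl ⟨hle, fun z hz1 hz2 hz3 => ?_⟩
        have hzx : z = x := frc_inj hcov hz1 hx1 (by rw [hz3])
        rw [hzx] at hz2
        omega
      · exact Or.inr ⟨hlt, huτ⟩
    refine Or.inr ⟨u, trivial, trivial, huS, hxS, adj_frc hcov hx1, ?_⟩
    intro w hw hadj hwS hconn
    have hwτ : H + t < tau G B₀ w := whiteConn_fwd hcov (by omega) hconn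
    exact frc_last hcov hx1 hadj (by omega)

lemma St_subset_iter (hcov : ∃ k, Set.univ ⊆ It G B₀ k) {H : ℕ} :
    ∀ t, St G B₀ H t ⊆ ZF.iter (ZF.PSDValid G Set.univ) (Dt G B₀ H 0) t := by
  intro t
  induction t with
  | zero =>
    rintro x (hx | hx)
    · exact hx
    · obtain ⟨h1, h2⟩ := hx
      omega
  | succ n ih =>
    have h2 : ZF.iter (ZF.PSDValid G Set.univ) (Dt G B₀ H 0) (n + 1)
        = ZF.step (ZF.PSDValid G Set.univ)
            (ZF.iter (ZF.PSDValid G Set.univ) (Dt G B₀ H 0) n) :=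
      Function.iterate_succ_apply' _ _ _
    rw [h2]
    exact (St_succ_subset hcov).trans (psd_step_mono ih)

lemma univ_subset_St {H : ℕ} (hcov2 : Set.univ ⊆ It G B₀ (2 * H)) :
    Set.univ ⊆ St G B₀ H H := by
  intro v _
  have hτ : tau G B₀ v ≤ 2 * H := tau_le (hcov2 (Set.mem_univ v))
  rcases le_or_gt (tau G B₀ v) H with hle | hlt
  · exact Or.inl ⟨hle, fun z hz1 hz2 hz3 => by omega⟩
  · exact Or.inr ⟨hlt, by omega⟩

end Psd

/-- The root (initial vertex) of the chain of `v`. -/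
noncomputable def root (G : SimpleGraph V) (B₀ : Set V) (v : V) : V :=
  (frc G B₀)^[tau G B₀ v] v

open Classical in
/-- The segment-successor of `u` (or `u` itself if there is none). -/
noncomputable def nxt (G : SimpleGraph V) (B₀ : Set V) (H : ℕ) (u : V) : V :=
  if hex : ∃ v, frc G B₀ v = u ∧ 1 ≤ tau G B₀ v ∧ tau G B₀ v ≤ H then hex.choose
  else u

/-- Climb `H` steps up the chain from `b`. -/
noncomputable def topOf (G : SimpleGraph V) (B₀ : Set V) (H : ℕ) (b : V) : V :=
  (nxt G B₀ H)^[H] b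

section Card

variable {G : SimpleGraph V} {B₀ : Set V}

lemma tau_iterate_frc (hcov : ∃ k, Set.univ ⊆ It G B₀ k) :
    ∀ n, ∀ v : V, tau G B₀ v ≤ n → tau G B₀ ((frc G B₀)^[n] v) = 0 := by
  intro n
  induction n with
  | zero => intro v hv; simpa using Nat.le_zero.mp hv
  | succ n ih =>
    intro v hv
    rcases Nat.eq_zero_or_pos (tau G B₀ v) with h0 | h1
    · rw [Function.iterate_succ_apply, tau_zero_frc hcov h0]
      exact ih v (by omega)
    · rw [Function.iterate_succ_apply]
      exact ih (frc G B₀ v) (by have := tau_frc_le hcov h1; omega)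

lemma tau_root (hcov : ∃ k, Set.univ ⊆ It G B₀ k) (v : V) :
    tau G B₀ (root G B₀ v) = 0 :=
  tau_iterate_frc hcov _ v le_rfl

lemma root_zero {v : V} (h0 : tau G B₀ v = 0) : root G B₀ v = v := by
  rw [root, h0]
  rfl

lemma iterate_frc_stable (hcov : ∃ k, Set.univ ⊆ It G B₀ k) :
    ∀ n, ∀ v : V, tau G B₀ v ≤ n → (frc G B₀)^[n] v = root G B₀ v := by
  intro n
  induction n with
  | zero =>
    intro v hv
    rw [root, Nat.le_zero.mp hv]
  | succ n ih =>
    intro v hv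
    rcases Nat.lt_or_ge (tau G B₀ v) (n + 1) with hlt | hge
    · rw [Function.iterate_succ_apply', ih v (by omega),
        tau_zero_frc hcov (tau_root hcov v)]
    · have : tau G B₀ v = n + 1 := by omega
      rw [root, this]

lemma root_frc (hcov : ∃ k, Set.univ ⊆ It G B₀ k) {v : V} (h1 : 1 ≤ tau G B₀ v) :
    root G B₀ (frc G B₀ v) = root G B₀ v := by
  have h2 : root G B₀ v = (frc G B₀)^[tau G B₀ v - 1] (frc G B₀ v) := by
    conv_lhs => rw [root, show tau G B₀ v = (tau G B₀ v - 1) + 1 by omega,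
      Function.iterate_succ_apply]
  rw [h2, iterate_frc_stable hcov _ _ (by have := tau_frc_le hcov h1; omega)]

lemma nxt_eq_of (hcov : ∃ k, Set.univ ⊆ It G B₀ k) {H : ℕ} {u y : V}
    (hy : frc G B₀ y = u) (h1 : 1 ≤ tau G B₀ y) (hH : tau G B₀ y ≤ H) :
    nxt G B₀ H u = y := by
  have hex : ∃ v, frc G B₀ v = u ∧ 1 ≤ tau G B₀ v ∧ tau G B₀ v ≤ H :=
    ⟨y, hy, h1, hH⟩
  rw [nxt, dif_pos hex]
  obtain ⟨h1', h2', h3'⟩ := hex.choose_spec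
  exact frc_inj hcov h2' h1 (by rw [h1', hy])

lemma nxt_fix_of_top {H : ℕ} {u : V} (hu : u ∈ Dt G B₀ H 0) :
    nxt G B₀ H u = u := by
  rw [nxt, dif_neg]
  rintro ⟨v, hv1, hv2, hv3⟩
  have := hu.2 v hv2 hv3 hv1
  omega

lemma nxt_top_of_fix (hcov : ∃ k, Set.univ ⊆ It G B₀ k) {H : ℕ} {u : V}
    (hτ : tau G B₀ u ≤ H) (hfix : nxt G B₀ H u = u) : u ∈ Dt G B₀ H 0 := by
  refine ⟨hτ, fun z hz1 hz2 hz3 => ?_⟩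
  have := nxt_eq_of hcov hz3 hz1 hz2
  rw [hfix] at this
  have hadj := adj_frc hcov hz1
  rw [hz3, this] at hadj
  exact absurd hadj (G.irrefl)

lemma nxt_spec_of_ne {H : ℕ} {u : V} (hne : nxt G B₀ H u ≠ u) :
    frc G B₀ (nxt G B₀ H u) = u ∧ 1 ≤ tau G B₀ (nxt G B₀ H u) ∧
      tau G B₀ (nxt G B₀ H u) ≤ H := by
  by_cases hex : ∃ v, frc G B₀ v = u ∧ 1 ≤ tau G B₀ v ∧ tau G B₀ v ≤ H
  · have h1 : nxt G B₀ H u = hex.choose := by rw [nxt, dif_pos hex]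
    rw [h1]
    exact hex.choose_spec
  · exact absurd (by rw [nxt, dif_neg hex]) hne

lemma root_nxt (hcov : ∃ k, Set.univ ⊆ It G B₀ k) {H : ℕ} (u : V) :
    root G B₀ (nxt G B₀ H u) = root G B₀ u := by
  by_cases hne : nxt G B₀ H u = u
  · rw [hne]
  · obtain ⟨h1, h2, h3⟩ := nxt_spec_of_ne hne
    rw [← root_frc hcov h2, h1]

lemma root_iterate_nxt (hcov : ∃ k, Set.univ ⊆ It G B₀ k) {H : ℕ} (b : V) :
    ∀ k, root G B₀ ((nxt G B₀ H)^[k] b) = root G B₀ b := by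
  intro k
  induction k with
  | zero => rfl
  | succ n ih => rw [Function.iterate_succ_apply', root_nxt hcov, ih]

lemma root_topOf (hcov : ∃ k, Set.univ ⊆ It G B₀ k) {H : ℕ} (b : V) :
    root G B₀ (topOf G B₀ H b) = root G B₀ b :=
  root_iterate_nxt hcov b H

lemma tau_iterate_nxt_le {H : ℕ} {b : V} (hb : tau G B₀ b ≤ H) :
    ∀ k, tau G B₀ ((nxt G B₀ H)^[k] b) ≤ H := by
  intro k
  induction k with
  | zero => exact hb
  | succ n ih =>
    rw [Function.iterate_succ_apply']
    by_cases hne : nxt G B₀ H ((nxt G B₀ H)^[n] b) = (nxt G B₀ H)^[n] b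
    · rw [hne]; exact ih
    · exact (nxt_spec_of_ne hne).2.2

lemma tau_iterate_nxt_ge (hcov : ∃ k, Set.univ ⊆ It G B₀ k) {H : ℕ} {b : V} :
    ∀ k, (nxt G B₀ H)^[k + 1] b ≠ (nxt G B₀ H)^[k] b →
      k + 1 ≤ tau G B₀ ((nxt G B₀ H)^[k + 1] b) := by
  intro k
  induction k with
  | zero =>
    intro hne
    rw [Function.iterate_one] at hne ⊢
    exact (nxt_spec_of_ne hne).2.1
  | succ n ih =>
    intro hne
    have e1 : (nxt G B₀ H)^[n + 1 + 1] b = nxt G B₀ H ((nxt G B₀ H)^[n + 1] b) :=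
      Function.iterate_succ_apply' _ _ _
    have e2 : (nxt G B₀ H)^[n + 1] b = nxt G B₀ H ((nxt G B₀ H)^[n] b) :=
      Function.iterate_succ_apply' _ _ _
    have hprev : (nxt G B₀ H)^[n + 1] b ≠ (nxt G B₀ H)^[n] b := by
      intro heq
      apply hne
      rw [e1, heq, ← e2]
      exact heq
    have h1 := ih hprev
    have hne' : nxt G B₀ H ((nxt G B₀ H)^[n + 1] b) ≠ (nxt G B₀ H)^[n + 1] b := by
      rw [← e1]
      exact hne
    obtain ⟨hf, h2, h3⟩ := nxt_spec_of_ne hne'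
    have h4 : tau G B₀ ((nxt G B₀ H)^[n + 1] b)
        ≤ tau G B₀ (nxt G B₀ H ((nxt G B₀ H)^[n + 1] b)) - 1 := by
      have := tau_frc_le hcov h2
      rw [hf] at this
      exact this
    rw [e1]
    omega

lemma topOf_mem (hcov : ∃ k, Set.univ ⊆ It G B₀ k) {H : ℕ} {b : V}
    (hb : tau G B₀ b ≤ H) : topOf G B₀ H b ∈ Dt G B₀ H 0 := by
  have hτ : tau G B₀ (topOf G B₀ H b) ≤ H := tau_iterate_nxt_le hb H
  refine nxt_top_of_fix hcov hτ ?_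
  by_contra hne
  have hne' : (nxt G B₀ H)^[H + 1] b ≠ (nxt G B₀ H)^[H] b := by
    rw [Function.iterate_succ_apply']
    exact hne
  have h1 := tau_iterate_nxt_ge hcov H hne'
  have h2 := tau_iterate_nxt_le hb (H + 1)
  omega

lemma nxt_fix_iterate {H : ℕ} {u : V} (hfix : nxt G B₀ H u = u) :
    ∀ m, (nxt G B₀ H)^[m] u = u := by
  intro m
  induction m with
  | zero => rfl
  | succ n ih => rw [Function.iterate_succ_apply', ih, hfix]

lemma climb (hcov : ∃ k, Set.univ ⊆ It G B₀ k) {H : ℕ} :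
    ∀ n, ∀ u : V, tau G B₀ u ≤ n → tau G B₀ u ≤ H →
      ∃ k ≤ tau G B₀ u, (nxt G B₀ H)^[k] (root G B₀ u) = u := by
  intro n
  induction n with
  | zero =>
    intro u hu _
    exact ⟨0, by omega, by rw [root_zero (Nat.le_zero.mp hu)]; rfl⟩
  | succ n ih =>
    intro u hu hH
    rcases Nat.eq_zero_or_pos (tau G B₀ u) with h0 | h1
    · exact ⟨0, by omega, by rw [root_zero h0]; rfl⟩
    · have hw : tau G B₀ (frc G B₀ u) ≤ tau G B₀ u - 1 := tau_frc_le hcov h1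
      obtain ⟨k, hk1, hk2⟩ := ih (frc G B₀ u) (by omega) (by omega)
      refine ⟨k + 1, by omega, ?_⟩
      rw [Function.iterate_succ_apply', ← root_frc hcov h1, hk2]
      exact nxt_eq_of hcov rfl h1 hH

lemma topOf_root (hcov : ∃ k, Set.univ ⊆ It G B₀ k) {H : ℕ} {u : V}
    (hu : u ∈ Dt G B₀ H 0) : topOf G B₀ H (root G B₀ u) = u := by
  obtain ⟨k, hk1, hk2⟩ := climb hcov (tau G B₀ u) u le_rfl hu.1
  have hkH : k ≤ H := le_trans hk1 hu.1
  have e : (nxt G B₀ H)^[H - k + k] (root G B₀ u) = u := by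
    rw [Function.iterate_add_apply, hk2, nxt_fix_iterate (nxt_fix_of_top hu)]
  rw [show H - k + k = H by omega] at e
  exact e

lemma Dt_eq_image (hcov : ∃ k, Set.univ ⊆ It G B₀ k) {H : ℕ} :
    Dt G B₀ H 0 = topOf G B₀ H '' {b | tau G B₀ b = 0} := by
  ext u
  constructor
  · intro hu
    exact ⟨root G B₀ u, tau_root hcov u, topOf_root hcov hu⟩
  · rintro ⟨b, hb, rfl⟩
    refine topOf_mem hcov ?_
    have h0 : tau G B₀ b = 0 := hb
    omega

lemma ncard_Dt (hcov : ∃ k, Set.univ ⊆ It G B₀ k) {H : ℕ} :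
    (Dt G B₀ H 0).ncard = B₀.ncard := by
  rw [Dt_eq_image hcov]
  have hinj : Set.InjOn (topOf G B₀ H) {b | tau G B₀ b = 0} := by
    intro b hb b' hb' heq
    have h1 : root G B₀ (topOf G B₀ H b) = root G B₀ (topOf G B₀ H b') := by rw [heq]
    rw [root_topOf hcov, root_topOf hcov, root_zero hb, root_zero hb'] at h1
    exact h1
  rw [Set.ncard_image_of_injOn hinj]
  congr 1
  ext b
  simp only [Set.mem_setOf_eq]
  constructor
  · intro h0
    have := mem_It_tau hcov b
    rw [h0] at this
    exact this
  · intro hb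
    exact Nat.le_zero.mp (tau_le (show b ∈ It G B₀ 0 from hb))

end Card
end ZFAux

/-- If `Z₊(G) = Z(G)`, then `pt₊(G) ≤ ⌈pt(G)/2⌉`. -/
theorem ptplus_le {V : Type*} [Fintype V] [DecidableEq V] (G : SimpleGraph V)
    (h : ZF.Zplus G = ZF.Z G) :
    ZF.ptplus G ≤ (ZF.pt G + 1) / 2 := by
  classical
  -- a minimum standard zero forcing set exists
  have hZne : {n | ∃ B : Set V, B.ncard = n ∧
      ZF.IsForcingSet (ZF.ZFValid G Set.univ) Set.univ B}.Nonempty :=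
    ⟨(Set.univ : Set V).ncard, Set.univ, rfl, subset_rfl, 0, subset_rfl⟩
  obtain ⟨B₁, hB₁card, hB₁force⟩ := Nat.sInf_mem hZne
  -- a minimum set realizing pt(G) exists
  have hptne : {t | ∃ B : Set V, B.ncard = ZF.Z G ∧
      ZF.IsForcingSet (ZF.ZFValid G Set.univ) Set.univ B ∧
      ZF.propTime (ZF.ZFValid G Set.univ) Set.univ B = t}.Nonempty :=
    ⟨_, B₁, hB₁card, hB₁force, rfl⟩
  have hptmem := Nat.sInf_mem hptne
  have hpteq : ZF.pt G = sInf {t | ∃ B : Set V, B.ncard = ZF.Z G ∧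
      ZF.IsForcingSet (ZF.ZFValid G Set.univ) Set.univ B ∧
      ZF.propTime (ZF.ZFValid G Set.univ) Set.univ B = t} := rfl
  rw [← hpteq] at hptmem
  obtain ⟨B₀, hBcard, hBforce, hBpt⟩ := hptmem
  -- the whole graph is forced by time pt(G)
  have hcovp : Set.univ ⊆ ZFAux.It G B₀ (ZF.pt G) := by
    have hne : {k | Set.univ ⊆ ZF.iter (ZF.ZFValid G Set.univ) B₀ k}.Nonempty :=
      hBforce.2
    have hmem := Nat.sInf_mem hne
    have heq : sInf {k | Set.univ ⊆ ZF.iter (ZF.ZFValid G Set.univ) B₀ k}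
        = ZF.pt G := hBpt
    rw [heq] at hmem
    exact hmem
  set H := (ZF.pt G + 1) / 2 with hH
  have hcov2 : Set.univ ⊆ ZFAux.It G B₀ (2 * H) :=
    hcovp.trans (ZFAux.It_mono G B₀ (by omega))
  have hcov : ∃ k, Set.univ ⊆ ZFAux.It G B₀ k := ⟨ZF.pt G, hcovp⟩
  -- the half-time PSD forcing set
  have hforce' : Set.univ ⊆ ZF.iter (ZF.PSDValid G Set.univ) (ZFAux.Dt G B₀ H 0) H :=
    (ZFAux.univ_subset_St hcov2).trans (ZFAux.St_subset_iter hcov H)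
  have hFS : ZF.IsForcingSet (ZF.PSDValid G Set.univ) Set.univ (ZFAux.Dt G B₀ H 0) :=
    ⟨Set.subset_univ _, H, hforce'⟩
  have hcard : (ZFAux.Dt G B₀ H 0).ncard = ZF.Zplus G := by
    rw [ZFAux.ncard_Dt hcov, hBcard, h]
  have hpt' : ZF.propTime (ZF.PSDValid G Set.univ) Set.univ (ZFAux.Dt G B₀ H 0) ≤ H :=
    Nat.sInf_le hforce'
  have hle : ZF.ptplus G ≤
      ZF.propTime (ZF.PSDValid G Set.univ) Set.univ (ZFAux.Dt G B₀ H 0) := by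
    have hmem : ZF.propTime (ZF.PSDValid G Set.univ) Set.univ (ZFAux.Dt G B₀ H 0) ∈
        {t | ∃ B : Set V, B.ncard = ZF.Zplus G ∧
          ZF.IsForcingSet (ZF.PSDValid G Set.univ) Set.univ B ∧
          ZF.propTime (ZF.PSDValid G Set.univ) Set.univ B = t} :=
      ⟨ZFAux.Dt G B₀ H 0, hcard, hFS, rfl⟩
    exact Nat.sInf_le hmem
  exact le_trans hle hpt'
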